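/- If G is a k-colorable graph with k ≥ 2, then α(G) ≥ (2/k) · α_{F2}(G), where α_{F2}(G) is the optimal value of the edge-constrained fractional independent set LP. -/

import Mathlib

open Finset

variable {V : Type} [Fintype V] [DecidableEq V]

/-- Fractional vertex cover LP value. -/
noncomputable def FVC (G : SimpleGraph V) : ℝ :=
  sInf {s : ℝ | ∃ x : V → ℝ, (∀ v, 0 ≤ x v ∧ x v ≤ 1) ∧
    (∀ u v, G.Adj u v → 1 ≤ x u + x v) ∧ s = ∑ v, x v}

/-- Fractional matching LP value. -/
noncomputable def FMM (G : SimpleGraph V) [DecidableRel G.Adj] : ℝ :=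
  sSup {s : ℝ | ∃ y : Sym2 V → ℝ, (∀ e, 0 ≤ y e ∧ y e ≤ 1) ∧
    (∀ v : V, ∑ e ∈ G.edgeFinset, (if v ∈ e then y e else 0) ≤ 1) ∧
    s = ∑ e ∈ G.edgeFinset, y e}

/-- Fractional clique packing LP value. -/
noncomputable def FCP (G : SimpleGraph V) : ℝ :=
  sSup {s : ℝ | ∃ x : Finset V → ℝ, (∀ C, 0 ≤ x C ∧ x C ≤ 1) ∧
    (∀ C : Finset V, ¬ G.IsClique (C : Set V) → x C = 0) ∧
    (∀ v : V, ∑ C : Finset V, (if v ∈ C then x C else 0) ≤ 1) ∧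
    s = ∑ C : Finset V, x C * ((C.card : ℝ) - 1)}

/-- Fractional clique cover LP value. -/
noncomputable def FCC (G : SimpleGraph V) : ℝ :=
  sInf {s : ℝ | ∃ y : Finset V → ℝ, (∀ C, 0 ≤ y C ∧ y C ≤ 1) ∧
    (∀ C : Finset V, ¬ G.IsClique (C : Set V) → y C = 0) ∧
    (∀ v : V, 1 ≤ ∑ C : Finset V, (if v ∈ C then y C else 0)) ∧
    s = ∑ C : Finset V, y C}

/-- Maximum independent set size. -/
noncomputable def alphaNum (G : SimpleGraph V) : ℕ :=
  sSup {k : ℕ | ∃ S : Finset V,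
    ((S : Set V).Pairwise fun u v => ¬ G.Adj u v) ∧ S.card = k}

/-- Clique number. -/
noncomputable def cliqueNum (G : SimpleGraph V) : ℕ :=
  sSup {k : ℕ | ∃ C : Finset V, G.IsNClique k C}

/-- Edge-and-small-clique constrained fractional independent set LP value `α_{Fk}`. -/
noncomputable def alphaF (G : SimpleGraph V) (k : ℕ) : ℝ :=
  sSup {s : ℝ | ∃ x : V → ℝ, (∀ v, 0 ≤ x v ∧ x v ≤ 1) ∧
    (∀ C : Finset V, G.IsClique (C : Set V) → C.card ≤ k → ∑ v ∈ C, x v ≤ 1) ∧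
    s = ∑ v, x v}

/-- Minimum vertex cover size. -/
noncomputable def VC (G : SimpleGraph V) : ℕ :=
  sInf {k : ℕ | ∃ S : Finset V,
    (∀ u v, G.Adj u v → u ∈ S ∨ v ∈ S) ∧ S.card = k}

/-- Storage capacity. -/
noncomputable def Cap (G : SimpleGraph V) : ℝ :=
  sSup {x : ℝ | ∃ q : ℕ, 2 ≤ q ∧ ∃ C : Finset (V → Fin q),
    (∀ v : V, ∃ f : ({u : V // G.Adj v u} → Fin q) → Fin q,
      ∀ c ∈ C, f (fun u => c u.1) = c v) ∧
    x = Real.logb q C.card}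

/-- Index coding broadcast rate over alphabet of size `q`. -/
noncomputable def IndQ (G : SimpleGraph V) (q : ℕ) : ℕ :=
  sInf {l : ℕ | ∃ f : (V → Fin q) → (Fin l → Fin q), ∀ v : V,
    ∃ g : (Fin l → Fin q) → ({u : V // G.Adj v u} → Fin q) → Fin q,
      ∀ p : V → Fin q, g (f p) (fun u => p u.1) = p v}

/-- Index coding broadcast rate. -/
noncomputable def Ind (G : SimpleGraph V) : ℝ :=
  sInf {x : ℝ | ∃ q : ℕ, 2 ≤ q ∧ x = IndQ G q}

/-- For `k`-colorable `G` (`k ≥ 2`), `α(G) ≥ (2/k)·α_{F2}(G)`. -/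
def EdgeFeas (G : SimpleGraph V) (x : V → ℝ) : Prop :=
  (∀ v, 0 ≤ x v ∧ x v ≤ 1) ∧ ∀ u v, G.Adj u v → x u + x v ≤ 1

lemma half_step (G : SimpleGraph V) (x : V → ℝ) (hx : EdgeFeas G x)
    (hne0 : (univ.filter fun v => ¬(x v = 0 ∨ x v = 1/2 ∨ x v = 1)).Nonempty) :
    ∃ y : V → ℝ, EdgeFeas G y ∧ ∑ v, x v ≤ ∑ v, y v ∧
      (univ.filter fun v => ¬(y v = 0 ∨ y v = 1/2 ∨ y v = 1)).card <
      (univ.filter fun v => ¬(x v = 0 ∨ x v = 1/2 ∨ x v = 1)).card := by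
  classical
  set P := univ.filter (fun v => 0 < x v ∧ x v < 1/2) with hPdef
  set Q := univ.filter (fun v => 1/2 < x v ∧ x v < 1) with hQdef
  have hPmem : ∀ v, v ∈ P ↔ (0 < x v ∧ x v < 1/2) := by
    intro v; simp [hPdef]
  have hQmem : ∀ v, v ∈ Q ↔ (1/2 < x v ∧ x v < 1) := by
    intro v; simp [hQdef]
  have hPQ : ∀ v, v ∈ P → v ∈ Q → False := by
    intro v hvP hvQ
    rw [hPmem] at hvP; rw [hQmem] at hvQ; linarith [hvP.2, hvQ.1]
  have hmemB : ∀ v, (¬(x v = 0 ∨ x v = 1/2 ∨ x v = 1)) ↔ (v ∈ P ∨ v ∈ Q) := by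
    intro v
    rw [hPmem, hQmem]
    obtain ⟨h0, h1⟩ := hx.1 v
    push_neg
    constructor
    · rintro ⟨a, b, c⟩
      rcases lt_trichotomy (x v) (1/2) with h | h | h
      · exact Or.inl ⟨lt_of_le_of_ne h0 (Ne.symm a), h⟩
      · exact absurd h b
      · exact Or.inr ⟨h, lt_of_le_of_ne h1 c⟩
    · rintro (⟨a, b⟩ | ⟨a, b⟩) <;> refine ⟨?_, ?_, ?_⟩ <;> linarith
  have hBPQ : (univ.filter fun v => ¬(x v = 0 ∨ x v = 1/2 ∨ x v = 1)) = P ∪ Q := by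
    ext v; simp only [mem_filter, mem_univ, true_and, mem_union]; exact hmemB v
  rw [hBPQ] at hne0
  have hxofO : ∀ v, v ∉ P → v ∉ Q → (x v = 0 ∨ x v = 1/2 ∨ x v = 1) := by
    intro v h1 h2; by_contra hc
    rcases (hmemB v).mp hc with h | h
    · exact h1 h
    · exact h2 h
  by_cases hcard : Q.card ≤ P.card
  · -- push P up, Q down
    set f : V → ℝ := fun v => if v ∈ P then 1/2 - x v else x v - 1/2 with hfdef
    set ε := (P ∪ Q).inf' hne0 f with hεdef
    have hεpos : 0 < ε := by
      rw [hεdef, Finset.lt_inf'_iff]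
      intro v hv
      rcases mem_union.mp hv with hvP | hvQ
      · have h := (hPmem v).mp hvP
        simp only [hfdef, if_pos hvP]; linarith [h.2]
      · have hvnP : v ∉ P := fun h => hPQ v h hvQ
        have h := (hQmem v).mp hvQ
        simp only [hfdef, if_neg hvnP]; linarith [h.1]
    have hεle : ∀ v ∈ P ∪ Q, ε ≤ f v := fun v hv => Finset.inf'_le f hv
    set y : V → ℝ := fun v => if v ∈ P then x v + ε else if v ∈ Q then x v - ε else x v with hydef
    have hyP : ∀ v ∈ P, y v = x v + ε := by
      intro v hv; simp only [hydef, if_pos hv]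
    have hyQ : ∀ v ∈ Q, y v = x v - ε := by
      intro v hv
      have hnp : v ∉ P := fun h => hPQ v h hv
      simp only [hydef, if_neg hnp, if_pos hv]
    have hyO : ∀ v, v ∉ P → v ∉ Q → y v = x v := by
      intro v h1 h2; simp only [hydef, if_neg h1, if_neg h2]
    have hyPle : ∀ v ∈ P, y v ≤ 1/2 := by
      intro v hv
      have := hεle v (mem_union_left _ hv)
      simp only [hfdef, if_pos hv] at this
      rw [hyP v hv]; linarith
    have hyQge : ∀ v ∈ Q, 1/2 ≤ y v := by
      intro v hv
      have hnp : v ∉ P := fun h => hPQ v h hv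
      have := hεle v (mem_union_right _ hv)
      simp only [hfdef, if_neg hnp] at this
      rw [hyQ v hv]; linarith
    have hbnd : ∀ v, 0 ≤ y v ∧ y v ≤ 1 := by
      intro v
      by_cases hvP : v ∈ P
      · have h := (hPmem v).mp hvP
        exact ⟨by rw [hyP v hvP]; linarith [h.1], by linarith [hyPle v hvP]⟩
      · by_cases hvQ : v ∈ Q
        · have h := (hQmem v).mp hvQ
          exact ⟨by linarith [hyQge v hvQ], by rw [hyQ v hvQ]; linarith [h.2]⟩
        · rw [hyO v hvP hvQ]; exact hx.1 v
    have hyle : ∀ v, v ∉ P → y v ≤ x v := by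
      intro v hv; by_cases hq : v ∈ Q
      · rw [hyQ v hq]; linarith
      · rw [hyO v hv hq]
    have key : ∀ a b, G.Adj a b → a ∈ P → y a + y b ≤ 1 := by
      intro a b hab haP
      by_cases hbP : b ∈ P
      · linarith [hyPle a haP, hyPle b hbP]
      · by_cases hbQ : b ∈ Q
        · rw [hyP a haP, hyQ b hbQ]
          have := hx.2 a b hab; linarith
        · rw [hyO b hbP hbQ]
          have haP' := (hPmem a).mp haP
          rcases hxofO b hbP hbQ with h | h | h
        -- x b = 0 or 1/2 or 1
          · rw [h]; linarith [hyPle a haP]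
          · rw [h]; linarith [hyPle a haP]
          · exfalso; have := hx.2 a b hab; rw [h] at this; linarith [haP'.1]
    have hedge : ∀ u v, G.Adj u v → y u + y v ≤ 1 := by
      intro u v huv
      by_cases huP : u ∈ P
      · exact key u v huv huP
      · by_cases hvP : v ∈ P
        · have := key v u huv.symm hvP; linarith
        · linarith [hyle u huP, hyle v hvP, hx.2 u v huv]
    have hsum : ∑ v, x v ≤ ∑ v, y v := by
      have heq : ∑ v, y v = ∑ v, x v + ε * P.card - ε * Q.card := by
        have h1 : ∀ v : V, y v = x v + (if v ∈ P then ε else 0) - (if v ∈ Q then ε else 0) := by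
          intro v
          by_cases hvP : v ∈ P
          · have hq : v ∉ Q := fun h => hPQ v hvP h
            rw [hyP v hvP, if_pos hvP, if_neg hq]; ring
          · by_cases hvQ : v ∈ Q
            · rw [hyQ v hvQ, if_neg hvP, if_pos hvQ]; ring
            · rw [hyO v hvP hvQ, if_neg hvP, if_neg hvQ]; ring
        rw [Finset.sum_congr rfl (fun v _ => h1 v), Finset.sum_sub_distrib,
          Finset.sum_add_distrib]
        rw [Finset.sum_ite_mem, Finset.sum_ite_mem, Finset.univ_inter, Finset.univ_inter,
          Finset.sum_const, Finset.sum_const]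
        push_cast
        ring
      rw [heq]
      have hc : (Q.card : ℝ) ≤ P.card := by exact_mod_cast hcard
      nlinarith [hεpos]
    obtain ⟨m, hm, hmeq⟩ := Finset.exists_mem_eq_inf' hne0 f
    have hεm : ε = f m := by rw [hεdef, hmeq]
    have hym : y m = 1/2 := by
      rcases mem_union.mp hm with hmP | hmQ
      · rw [hyP m hmP, hεm]; simp only [hfdef, if_pos hmP]; ring
      · have hnp : m ∉ P := fun h => hPQ m h hmQ
        rw [hyQ m hmQ, hεm]; simp only [hfdef, if_neg hnp]; ring
    have hsub : (univ.filter fun v => ¬(y v = 0 ∨ y v = 1/2 ∨ y v = 1)) ⊆ P ∪ Q := by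
      intro v hv
      simp only [mem_filter, mem_univ, true_and] at hv
      by_contra hc
      rw [mem_union] at hc; push_neg at hc
      rw [hyO v hc.1 hc.2] at hv
      exact hv (hxofO v hc.1 hc.2)
    have hmnot : m ∉ (univ.filter fun v => ¬(y v = 0 ∨ y v = 1/2 ∨ y v = 1)) := by
      simp [hym]
    refine ⟨y, ⟨hbnd, hedge⟩, hsum, ?_⟩
    rw [hBPQ]
    exact Finset.card_lt_card ⟨hsub, fun hss => hmnot (hss hm)⟩
  · -- push P down, Q up
    push_neg at hcard
    set f : V → ℝ := fun v => if v ∈ P then x v else 1 - x v with hfdef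
    set ε := (P ∪ Q).inf' hne0 f with hεdef
    have hεpos : 0 < ε := by
      rw [hεdef, Finset.lt_inf'_iff]
      intro v hv
      rcases mem_union.mp hv with hvP | hvQ
      · have h := (hPmem v).mp hvP
        simp only [hfdef, if_pos hvP]; linarith [h.1]
      · have hvnP : v ∉ P := fun h => hPQ v h hvQ
        have h := (hQmem v).mp hvQ
        simp only [hfdef, if_neg hvnP]; linarith [h.2]
    have hεle : ∀ v ∈ P ∪ Q, ε ≤ f v := fun v hv => Finset.inf'_le f hv
    set y : V → ℝ := fun v => if v ∈ P then x v - ε else if v ∈ Q then x v + ε else x v with hydef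
    have hyP : ∀ v ∈ P, y v = x v - ε := by
      intro v hv; simp only [hydef, if_pos hv]
    have hyQ : ∀ v ∈ Q, y v = x v + ε := by
      intro v hv
      have hnp : v ∉ P := fun h => hPQ v h hv
      simp only [hydef, if_neg hnp, if_pos hv]
    have hyO : ∀ v, v ∉ P → v ∉ Q → y v = x v := by
      intro v h1 h2; simp only [hydef, if_neg h1, if_neg h2]
    have hyPge : ∀ v ∈ P, 0 ≤ y v := by
      intro v hv
      have := hεle v (mem_union_left _ hv)
      simp only [hfdef, if_pos hv] at this
      rw [hyP v hv]; linarith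
    have hyQle : ∀ v ∈ Q, y v ≤ 1 := by
      intro v hv
      have hnp : v ∉ P := fun h => hPQ v h hv
      have := hεle v (mem_union_right _ hv)
      simp only [hfdef, if_neg hnp] at this
      rw [hyQ v hv]; linarith
    have hbnd : ∀ v, 0 ≤ y v ∧ y v ≤ 1 := by
      intro v
      by_cases hvP : v ∈ P
      · have h := (hPmem v).mp hvP
        exact ⟨hyPge v hvP, by rw [hyP v hvP]; linarith [h.2]⟩
      · by_cases hvQ : v ∈ Q
        · have h := (hQmem v).mp hvQ
          exact ⟨by rw [hyQ v hvQ]; linarith [h.1], hyQle v hvQ⟩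
        · rw [hyO v hvP hvQ]; exact hx.1 v
    have hyle : ∀ v, v ∉ Q → y v ≤ x v := by
      intro v hv; by_cases hp : v ∈ P
      · rw [hyP v hp]; linarith
      · rw [hyO v hp hv]
    have key : ∀ a b, G.Adj a b → a ∈ Q → y a + y b ≤ 1 := by
      intro a b hab haQ
      have haQ' := (hQmem a).mp haQ
      by_cases hbQ : b ∈ Q
      · exfalso
        have hb := (hQmem b).mp hbQ
        have := hx.2 a b hab; linarith [haQ'.1, hb.1]
      · by_cases hbP : b ∈ P
        · rw [hyQ a haQ, hyP b hbP]
          have := hx.2 a b hab; linarith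
        · rw [hyO b hbP hbQ]
          rcases hxofO b hbP hbQ with h | h | h
          · rw [h]; linarith [hyQle a haQ]
          · exfalso; have := hx.2 a b hab; rw [h] at this; linarith [haQ'.1]
          · exfalso; have := hx.2 a b hab; rw [h] at this; linarith [haQ'.1]
    have hedge : ∀ u v, G.Adj u v → y u + y v ≤ 1 := by
      intro u v huv
      by_cases huQ : u ∈ Q
      · exact key u v huv huQ
      · by_cases hvQ : v ∈ Q
        · have := key v u huv.symm hvQ; linarith
        · linarith [hyle u huQ, hyle v hvQ, hx.2 u v huv]
    have hsum : ∑ v, x v ≤ ∑ v, y v := by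
      have heq : ∑ v, y v = ∑ v, x v + ε * Q.card - ε * P.card := by
        have h1 : ∀ v : V, y v = x v + (if v ∈ Q then ε else 0) - (if v ∈ P then ε else 0) := by
          intro v
          by_cases hvP : v ∈ P
          · have hq : v ∉ Q := fun h => hPQ v hvP h
            rw [hyP v hvP, if_pos hvP, if_neg hq]; ring
          · by_cases hvQ : v ∈ Q
            · rw [hyQ v hvQ, if_neg hvP, if_pos hvQ]; ring
            · rw [hyO v hvP hvQ, if_neg hvP, if_neg hvQ]; ring
        rw [Finset.sum_congr rfl (fun v _ => h1 v), Finset.sum_sub_distrib,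
          Finset.sum_add_distrib]
        rw [Finset.sum_ite_mem, Finset.sum_ite_mem, Finset.univ_inter, Finset.univ_inter,
          Finset.sum_const, Finset.sum_const]
        push_cast
        ring
      rw [heq]
      have hc : (P.card : ℝ) ≤ Q.card := by exact_mod_cast hcard.le
      nlinarith [hεpos]
    obtain ⟨m, hm, hmeq⟩ := Finset.exists_mem_eq_inf' hne0 f
    have hεm : ε = f m := by rw [hεdef, hmeq]
    have hym : y m = 0 ∨ y m = 1 := by
      rcases mem_union.mp hm with hmP | hmQ
      · left; rw [hyP m hmP, hεm]; simp only [hfdef, if_pos hmP]; ring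
      · right
        have hnp : m ∉ P := fun h => hPQ m h hmQ
        rw [hyQ m hmQ, hεm]; simp only [hfdef, if_neg hnp]; ring
    have hsub : (univ.filter fun v => ¬(y v = 0 ∨ y v = 1/2 ∨ y v = 1)) ⊆ P ∪ Q := by
      intro v hv
      simp only [mem_filter, mem_univ, true_and] at hv
      by_contra hc
      rw [mem_union] at hc; push_neg at hc
      rw [hyO v hc.1 hc.2] at hv
      exact hv (hxofO v hc.1 hc.2)
    have hmnot : m ∉ (univ.filter fun v => ¬(y v = 0 ∨ y v = 1/2 ∨ y v = 1)) := by
      rcases hym with h | h <;> simp [h]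
    refine ⟨y, ⟨hbnd, hedge⟩, hsum, ?_⟩
    rw [hBPQ]
    exact Finset.card_lt_card ⟨hsub, fun hss => hmnot (hss hm)⟩

lemma half_integral (G : SimpleGraph V) : ∀ (n : ℕ) (x : V → ℝ),
    (univ.filter fun v => ¬(x v = 0 ∨ x v = 1/2 ∨ x v = 1)).card ≤ n → EdgeFeas G x →
    ∃ y : V → ℝ, EdgeFeas G y ∧ (∀ v, y v = 0 ∨ y v = 1/2 ∨ y v = 1) ∧
      ∑ v, x v ≤ ∑ v, y v := by
  intro n
  induction n with
  | zero =>
    intro x hcard hx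
    refine ⟨x, hx, ?_, le_refl _⟩
    intro v
    by_contra h
    have : v ∈ univ.filter fun v => ¬(x v = 0 ∨ x v = 1/2 ∨ x v = 1) :=
      mem_filter.mpr ⟨mem_univ v, h⟩
    have := Finset.card_pos.mpr ⟨v, this⟩
    omega
  | succ n ih =>
    intro x hcard hx
    by_cases hne : (univ.filter fun v => ¬(x v = 0 ∨ x v = 1/2 ∨ x v = 1)).Nonempty
    · obtain ⟨y, hy, hsum, hlt⟩ := half_step G x hx hne
      obtain ⟨z, hz, hzh, hsum2⟩ := ih y (by omega) hy
      exact ⟨z, hz, hzh, le_trans hsum hsum2⟩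
    · refine ⟨x, hx, ?_, le_refl _⟩
      intro v
      by_contra h
      exact hne ⟨v, mem_filter.mpr ⟨mem_univ v, h⟩⟩

lemma alphaNum_ge (G : SimpleGraph V) (S : Finset V)
    (hS : (S : Set V).Pairwise fun u v => ¬ G.Adj u v) : S.card ≤ alphaNum G := by
  apply le_csSup
  · exact ⟨Fintype.card V, by rintro k ⟨T, -, rfl⟩; exact T.card_le_univ⟩
  · exact ⟨S, hS, rfl⟩

theorem stmt3 (G : SimpleGraph V) (k : ℕ) (hk : 2 ≤ k) (h : G.Colorable k) :
    (2 / (k : ℝ)) * alphaF G 2 ≤ (alphaNum G : ℝ) := by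
  classical
  have hk0 : (0:ℝ) < k := by
    have : (2:ℝ) ≤ k := by exact_mod_cast hk
    linarith
  have hbound : alphaF G 2 ≤ (k : ℝ)/2 * alphaNum G := by
    apply Real.sSup_le
    · rintro s ⟨x, hx01, hcl, rfl⟩
      have hef : EdgeFeas G x := by
        refine ⟨hx01, fun u v huv => ?_⟩
        have hcl2 := hcl {u, v} ?_ ?_
        · rwa [Finset.sum_pair huv.ne] at hcl2
        · intro a ha b hb hab
          simp only [coe_insert, coe_singleton, Set.mem_insert_iff, Set.mem_singleton_iff] at ha hb
          rcases ha with rfl | rfl <;> rcases hb with rfl | rfl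
          · exact absurd rfl hab
          · exact huv
          · exact huv.symm
          · exact absurd rfl hab
        · exact le_trans (Finset.card_insert_le u {v}) (by simp)
      obtain ⟨y, hy, hyh, hsum⟩ := half_integral G _ x le_rfl hef
      set V1 := univ.filter (fun v => y v = 1) with hV1def
      set Vh := univ.filter (fun v => y v = 1/2) with hVhdef
      have hsumy : ∑ v, y v = (V1.card : ℝ) + (Vh.card : ℝ) / 2 := by
        have h1 : ∀ v : V, y v = (if v ∈ V1 then (1:ℝ) else 0) +
            (if v ∈ Vh then (1:ℝ)/2 else 0) := by
          intro v
          have hv1 : v ∈ V1 ↔ y v = 1 := by simp [hV1def]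
          have hvh : v ∈ Vh ↔ y v = 1/2 := by simp [hVhdef]
          rcases hyh v with h0 | h0 | h0 <;> rw [h0] <;> norm_num [hv1, hvh, h0]
        rw [Finset.sum_congr rfl (fun v _ => h1 v), Finset.sum_add_distrib,
          Finset.sum_ite_mem, Finset.sum_ite_mem, Finset.univ_inter, Finset.univ_inter,
          Finset.sum_const, Finset.sum_const]
        push_cast; ring
      -- coloring and pigeonhole
      obtain ⟨C⟩ := h
      have hfib : Vh.card = ∑ i : Fin k, (Vh.filter fun v => C v = i).card :=
        Finset.card_eq_sum_card_fiberwise (fun v _ => mem_univ (C v))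
      have hkne : (univ : Finset (Fin k)).Nonempty := ⟨⟨0, by omega⟩, mem_univ _⟩
      have hpig : ∃ i : Fin k, Vh.card ≤ k * (Vh.filter fun v => C v = i).card := by
        by_contra hcon
        push_neg at hcon
        have h3 : ∑ i : Fin k, k * (Vh.filter fun v => C v = i).card <
            ∑ _i : Fin k, Vh.card :=
          Finset.sum_lt_sum_of_nonempty hkne (fun i _ => hcon i)
        simp only [Finset.sum_const, smul_eq_mul, Finset.card_univ, Fintype.card_fin,
          ← Finset.mul_sum, ← hfib] at h3
        omega
      obtain ⟨i, hi⟩ := hpig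
      set S := Vh.filter (fun v => C v = i) with hSdef
      have hSsub : ∀ v ∈ S, y v = 1/2 ∧ C v = i := by
        intro v hv
        simp only [hSdef, hVhdef, mem_filter, mem_univ, true_and] at hv
        exact hv
      have hV1mem : ∀ v ∈ V1, y v = 1 := by
        intro v hv; simpa [hV1def] using hv
      have hdisj : Disjoint V1 S := by
        rw [Finset.disjoint_left]
        intro v hv1 hvS
        have h1 := hV1mem v hv1
        have h2 := (hSsub v hvS).1
        rw [h1] at h2; norm_num at h2
      have hind : ((↑(V1 ∪ S) : Set V).Pairwise fun u v => ¬ G.Adj u v) := by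
        intro u hu v hv hne hadj
        simp only [coe_union, Set.mem_union, mem_coe] at hu hv
        have hyu : y u = 1 ∨ (y u = 1/2 ∧ C u = i) := by
          rcases hu with h' | h'
          · exact Or.inl (hV1mem u h')
          · exact Or.inr (hSsub u h')
        have hyv : y v = 1 ∨ (y v = 1/2 ∧ C v = i) := by
          rcases hv with h' | h'
          · exact Or.inl (hV1mem v h')
          · exact Or.inr (hSsub v h')
        have hedge := hy.2 u v hadj
        rcases hyu with h1 | h1 <;> rcases hyv with h2 | h2
        · rw [h1, h2] at hedge; linarith
        · rw [h1, h2.1] at hedge; linarith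
        · rw [h1.1, h2] at hedge; linarith
        · exact C.valid hadj (h1.2.trans h2.2.symm)
      have hα : (V1.card : ℝ) + S.card ≤ alphaNum G := by
        have := alphaNum_ge G (V1 ∪ S) hind
        rw [Finset.card_union_of_disjoint hdisj] at this
        exact_mod_cast this
      have hVhS : (Vh.card : ℝ) ≤ (k : ℝ) * S.card := by exact_mod_cast hi
      have hk2 : (2:ℝ) ≤ k := by exact_mod_cast hk
      have hS0 : (0:ℝ) ≤ S.card := by positivity
      have hV10 : (0:ℝ) ≤ V1.card := by positivity
      calc ∑ v, x v ≤ ∑ v, y v := hsum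
        _ = (V1.card : ℝ) + (Vh.card : ℝ)/2 := hsumy
        _ ≤ (k : ℝ)/2 * alphaNum G := by nlinarith
    · positivity
  have h2k : (0:ℝ) < 2 / k := by positivity
  calc (2 / (k : ℝ)) * alphaF G 2 ≤ (2 / (k:ℝ)) * ((k:ℝ)/2 * alphaNum G) := by
        exact mul_le_mul_of_nonneg_left hbound h2k.le
    _ = alphaNum G := by field_simp
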